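/- arXiv:0808.2487 — 3 statements merged into one kernel-verified Lean document; each statement's English description precedes it below -/
import Mathlib

section
/- Let α₁ = id, α₂, ..., α_n be automorphisms of the hyperfinite II₁ factor R with α₂, ..., α_n outer, let M₁ = R ⊗ M_n(ℂ) with matrix units e_{ij}, let M₀ = α(R) where α(y) = Σᵢ e_{ii} ⊗ αᵢ(y), and let G be the image in Out R of the group generated by the αᵢ. Then for every x = (x_n) in M₀^ω ∩ M₁' and every g ∈ G, the pointwise ultrapower automorphism (α_g)_ω fixes x; that is, M₀^ω ∩ M₁' is contained in the fixed-point algebra of the action of G on (M₁)_ω. -/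
open scoped ENNReal

noncomputable section

section Base

variable {M : Type*} [NormedRing M] [StarRing M] [CStarRing M] [NormedAlgebra ℂ M] [StarModule ℂ M] [PartialOrder M] [StarOrderedRing M] [CompleteSpace M]

/-- A faithful normalized tracial state (the trace of a finite von Neumann algebra). -/
structure IsTracialState (tr : M →ₗ[ℂ] ℂ) : Prop where
  map_one : tr 1 = 1
  tr_comm : ∀ x y : M, tr (x * y) = tr (y * x)
  pos : ∀ x : M, 0 ≤ x → ∃ r : ℝ, 0 ≤ r ∧ tr x = (r : ℂ)
  faithful : ∀ x : M, 0 ≤ x → tr x = 0 → x = 0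
  norm_le : ∀ x : M, ‖tr x‖ ≤ ‖x‖

/-- The trace 2-norm `‖x‖₂ = √(tr (x* x))`. -/
def nrm2 (tr : M →ₗ[ℂ] ℂ) (x : M) : ℝ := Real.sqrt ((tr (star x * x)).re)

/-- The commutant of a subset. -/
def commutantSet (S : Set M) : Set M := {x | ∀ s ∈ S, s * x = x * s}

/-- The relative commutant `A' ∩ B`. -/
def relCommSet (A B : Set M) : Set M := {x | x ∈ B ∧ ∀ a ∈ A, a * x = x * a}

/-- The center of a subset: elements of `S` commuting with all of `S`. -/
def centerSet (S : Set M) : Set M := {x | x ∈ S ∧ ∀ y ∈ S, x * y = y * x}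

/-- `S` is a (sub)factor: its relative center consists of scalars. -/
def IsSubFactorSet (S : Set M) : Prop :=
  ∀ z ∈ S, (∀ y ∈ S, z * y = y * z) → ∃ c : ℂ, z = algebraMap ℂ M c

/-- A trace-preserving conditional expectation onto the subalgebra (set) `A`. -/
structure IsCondExp (tr : M →ₗ[ℂ] ℂ) (A : Set M) (E : M →ₗ[ℂ] M) : Prop where
  mem : ∀ x : M, E x ∈ A
  fix : ∀ x ∈ A, E x = x
  bimod : ∀ a ∈ A, ∀ b ∈ A, ∀ x : M, E (a * x * b) = a * E x * b
  pos : ∀ x : M, 0 ≤ x → 0 ≤ E x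
  map_star : ∀ x : M, E (star x) = star (E x)
  trace_eq : ∀ x : M, tr (E x) = tr x

/-- The Pimsner–Popa index `[B : A]` of an inclusion `A ⊆ B`, computed from the
trace-preserving conditional expectation `E` onto `A`: the reciprocal of the best
constant `λ` such that `λ • x ≤ E x` for every positive `x ∈ B`. -/
def ppIndex (E : M →ₗ[ℂ] M) (B : Set M) : ℝ≥0∞ :=
  (⨆ (l : NNReal) (_ : ∀ x ∈ B, 0 ≤ x → (((l : ℝ) : ℂ)) • x ≤ E x), (l : ℝ≥0∞))⁻¹

/-- A II₁ factor: an infinite-dimensional factor with a faithful tracial state. -/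
structure IsII1Factor (tr : M →ₗ[ℂ] ℂ) : Prop where
  tracial : IsTracialState tr
  factor : ∀ z : M, (∀ y : M, z * y = y * z) → ∃ c : ℂ, z = algebraMap ℂ M c
  infiniteDimensional : ¬ FiniteDimensional ℂ M

/-- Hyperfiniteness of `S`: an increasing chain of finite-dimensional *-subalgebras
contained in `S` whose union is `‖·‖₂`-dense in `S`. -/
def IsHyperfiniteSet (tr : M →ₗ[ℂ] ℂ) (S : Set M) : Prop :=
  ∃ B : ℕ → StarSubalgebra ℂ M, Monotone B ∧ (∀ n, FiniteDimensional ℂ ↥(B n)) ∧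
    (∀ n, (B n : Set M) ⊆ S) ∧
    ∀ x ∈ S, ∀ ε : ℝ, 0 < ε → ∃ n, ∃ y ∈ B n, nrm2 tr (x - y) < ε

/-- A bounded sequence. -/
def BddSeq (x : ℕ → M) : Prop := ∃ C : ℝ, ∀ n, ‖x n‖ ≤ C

/-- A free ultrafilter on ℕ: one containing all cofinite sets. -/
def IsFreeUltrafilter (ω : Ultrafilter ℕ) : Prop := (ω : Filter ℕ) ≤ Filter.cofinite

variable {N : Type*} [NormedRing N] [StarRing N] [CStarRing N] [NormedAlgebra ℂ N] [StarModule ℂ N] [PartialOrder N] [StarOrderedRing N] [CompleteSpace N]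

/-- `π` presents `N` as the tracial ultrapower `M^ω`: the quotient of the algebra of
bounded sequences in `M` by the ideal of sequences with `‖·‖₂ → 0` along `ω`. -/
structure IsUltrapower (ω : Ultrafilter ℕ) (trM : M →ₗ[ℂ] ℂ) (trN : N →ₗ[ℂ] ℂ)
    (π : (ℕ → M) → N) : Prop where
  map_add : ∀ x y : ℕ → M, BddSeq x → BddSeq y → π (fun n => x n + y n) = π x + π y
  map_mul : ∀ x y : ℕ → M, BddSeq x → BddSeq y → π (fun n => x n * y n) = π x * π y
  map_smul : ∀ (c : ℂ) (x : ℕ → M), BddSeq x → π (fun n => c • x n) = c • π x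
  map_star : ∀ x : ℕ → M, BddSeq x → π (fun n => star (x n)) = star (π x)
  map_one : π (fun _ => 1) = 1
  norm_le : ∀ (x : ℕ → M) (C : ℝ), (∀ n, ‖x n‖ ≤ C) → ‖π x‖ ≤ C
  trace_tendsto : ∀ x : ℕ → M, BddSeq x →
    Filter.Tendsto (fun n => trM (x n)) (ω : Filter ℕ) (nhds (trN (π x)))
  eq_iff : ∀ x y : ℕ → M, BddSeq x → BddSeq y →
    (π x = π y ↔ Filter.Tendsto (fun n => nrm2 trM (x n - y n)) (ω : Filter ℕ) (nhds 0))
  surj : ∀ z : N, ∃ x : ℕ → M, BddSeq x ∧ π x = z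

/-- The canonical embedding of `M` into the ultrapower, via constant sequences. -/
def uConst (π : (ℕ → M) → N) (a : M) : N := π (fun _ => a)

/-- The image `S^ω` in the ultrapower of the bounded sequences with entries in `S`. -/
def uSet (π : (ℕ → M) → N) (S : Set M) : Set N :=
  {z | ∃ x : ℕ → M, BddSeq x ∧ (∀ n, x n ∈ S) ∧ π x = z}

end Base



section Aux
set_option linter.unusedSectionVars false

variable {M : Type*} [NormedRing M] [StarRing M] [CStarRing M] [NormedAlgebra ℂ M] [StarModule ℂ M] [PartialOrder M] [StarOrderedRing M] [CompleteSpace M]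

variable {tr : M →ₗ[ℂ] ℂ}

theorem my_nrm2_nonneg (x : M) : 0 ≤ nrm2 tr x := Real.sqrt_nonneg _

theorem my_tr_sq (h : IsTracialState tr) (x : M) :
    tr (star x * x) = ((nrm2 tr x ^ 2 : ℝ) : ℂ) := by
  obtain ⟨r, hr0, hr⟩ := h.pos _ (star_mul_self_nonneg x)
  rw [hr]
  unfold nrm2
  rw [hr]
  norm_num [Real.sq_sqrt, hr0]

theorem my_re_sq (h : IsTracialState tr) (x : M) :
    (tr (star x * x)).re = nrm2 tr x ^ 2 := by
  rw [my_tr_sq h x, Complex.ofReal_re]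

theorem my_nrm2_zero : nrm2 tr (0 : M) = 0 := by
  unfold nrm2
  simp

theorem my_nrm2_neg (x : M) : nrm2 tr (-x) = nrm2 tr x := by
  unfold nrm2
  simp

theorem my_nrm2_add_le (h : IsTracialState tr) (x y : M) :
    nrm2 tr (x + y) ≤ nrm2 tr x + nrm2 tr y := by
  set A := nrm2 tr x with hA
  set B := nrm2 tr y with hB
  set s : ℂ := tr (star x * y) + tr (star y * x) with hs
  have key : ∀ t : ℝ, tr (star (x + (t : ℂ) • y) * (x + (t : ℂ) • y))
      = tr (star x * x) + (t : ℂ) * s + (t : ℂ) ^ 2 * tr (star y * y) := by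
    intro t
    have expand : star (x + (t : ℂ) • y) * (x + (t : ℂ) • y)
        = star x * x + (t : ℂ) • (star x * y + star y * x) + ((t : ℂ) ^ 2) • (star y * y) := by
      simp only [star_add, star_smul, Complex.star_def, Complex.conj_ofReal, add_mul, mul_add,
        smul_mul_assoc, mul_smul_comm, smul_smul, smul_add, sq]
      abel
    rw [expand, map_add, map_add, map_smul, map_smul, map_add, hs]
    simp [smul_eq_mul]
  have h0 : ∀ t : ℝ, 0 ≤ B ^ 2 * (t * t) + s.re * t + A ^ 2 := by
    intro t
    have h1 : (tr (star (x + (t : ℂ) • y) * (x + (t : ℂ) • y))).re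
        = A ^ 2 + t * s.re + t ^ 2 * B ^ 2 := by
      rw [key t, my_tr_sq h x, my_tr_sq h y]
      simp [Complex.add_re, Complex.mul_re, Complex.ofReal_re, Complex.ofReal_im, pow_two,
        ← Complex.ofReal_pow]
      all_goals ring
    have h2 := my_re_sq h (x + (t : ℂ) • y)
    rw [h1] at h2
    nlinarith [sq_nonneg (nrm2 tr (x + (t : ℂ) • y))]
  have hd := discrim_le_zero h0
  have hAB : 0 ≤ A := my_nrm2_nonneg x
  have hBB : 0 ≤ B := my_nrm2_nonneg y
  have hsre : s.re ≤ 2 * A * B := by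
    have h1 : s.re ^ 2 ≤ (2 * A * B) ^ 2 := by
      unfold discrim at hd
      nlinarith
    calc s.re ≤ |s.re| := le_abs_self _
    _ = Real.sqrt (s.re ^ 2) := (Real.sqrt_sq_eq_abs _).symm
    _ ≤ Real.sqrt ((2 * A * B) ^ 2) := Real.sqrt_le_sqrt h1
    _ = 2 * A * B := by rw [Real.sqrt_sq (by positivity)]
  have hre : (tr (star (x + y) * (x + y))).re ≤ (A + B) ^ 2 := by
    have h1 := key 1
    simp only [Complex.ofReal_one, one_smul, one_mul, one_pow] at h1
    rw [h1]
    simp [my_tr_sq h x, my_tr_sq h y, Complex.add_re, ← Complex.ofReal_pow, Complex.ofReal_re]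
    nlinarith
  calc nrm2 tr (x + y) = Real.sqrt ((tr (star (x + y) * (x + y))).re) := rfl
  _ ≤ Real.sqrt ((A + B) ^ 2) := Real.sqrt_le_sqrt hre
  _ = A + B := Real.sqrt_sq (by positivity)

theorem my_nrm2_sum_le (h : IsTracialState tr) {ι : Type*} (s : Finset ι) (f : ι → M) :
    nrm2 tr (∑ i ∈ s, f i) ≤ ∑ i ∈ s, nrm2 tr (f i) := by
  classical
  induction s using Finset.cons_induction with
  | empty => simp [my_nrm2_zero]
  | cons a s ha ih =>
    rw [Finset.sum_cons, Finset.sum_cons]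
    exact le_trans (my_nrm2_add_le h _ _) (by linarith)

theorem my_nrm2_mul_left (h : IsTracialState tr) {v : M} (hv : star v * v = 1) (a : M) :
    nrm2 tr (v * a) = nrm2 tr a := by
  unfold nrm2
  congr 2
  rw [star_mul]
  rw [show star a * star v * (v * a) = star a * (star v * v) * a by noncomm_ring, hv, mul_one]

theorem my_nrm2_mul_right (h : IsTracialState tr) {v : M} (hv : v * star v = 1) (a : M) :
    nrm2 tr (a * v) = nrm2 tr a := by
  unfold nrm2
  congr 2
  rw [star_mul]
  rw [show star v * star a * (a * v) = star v * ((star a * a) * v) by noncomm_ring, h.tr_comm,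
    show star a * a * v * star v = star a * a * (v * star v) by noncomm_ring, hv, mul_one]


end Aux

/-- For the diagonal subfactor `M₀ = α(R) ⊂ M₁ = R ⊗ Mₙ(ℂ)` (with
`α(y) = ∑ᵢ eᵢᵢ ⊗ αᵢ(y)`), every element of `M₀^ω ∩ M₁'` is fixed by the pointwise
ultrapower automorphism `(α_g)_ω` of every representative `α_g ∈ Aut R` of every
element `g` of the image `G` in `Out R` of the group generated by the `αᵢ`; that is,
`M₀^ω ∩ M₁'` is contained in the fixed-point algebra of the action of `G` on
`(M₁)_ω`. -/
theorem diagonal_subfactor_central_sequences_are_G_fixed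
    {R : Type*} [NormedRing R] [StarRing R] [CStarRing R] [NormedAlgebra ℂ R] [StarModule ℂ R] [PartialOrder R] [StarOrderedRing R] [CompleteSpace R]
    {M1 : Type*} [NormedRing M1] [StarRing M1] [CStarRing M1] [NormedAlgebra ℂ M1] [StarModule ℂ M1] [PartialOrder M1] [StarOrderedRing M1] [CompleteSpace M1]
    {N : Type*} [NormedRing N] [StarRing N] [CStarRing N] [NormedAlgebra ℂ N] [StarModule ℂ N] [PartialOrder N] [StarOrderedRing N] [CompleteSpace N]
    (trR : R →ₗ[ℂ] ℂ) (trM : M1 →ₗ[ℂ] ℂ) (trN : N →ₗ[ℂ] ℂ)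
    -- `R` is the hyperfinite II₁ factor:
    (hR : IsII1Factor trR) (hRhyp : IsHyperfiniteSet trR (Set.univ : Set R))
    (hM : IsII1Factor trM)
    (n : ℕ) (hn : 0 < n)
    -- automorphisms `α₁ = id, α₂, ..., αₙ` of `R`, outer for `i ≠ 0`:
    (α : Fin n → (R ≃ₐ[ℂ] R))
    (hα0 : α ⟨0, hn⟩ = 1)
    (hαstar : ∀ i (r : R), α i (star r) = star (α i r))
    (hαtr : ∀ i (r : R), trR (α i r) = trR r)
    (houter : ∀ i : Fin n, i ≠ ⟨0, hn⟩ →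
      ¬ ∃ u ∈ unitary R, ∀ r : R, α i r = u * r * star u)
    -- `M₁ = R ⊗ Mₙ(ℂ)`, presented by matrix units `eM` and an embedding `ι` of `R`:
    (eM : Fin n → Fin n → M1)
    (hmul : ∀ i j k l, eM i j * eM k l = if j = k then eM i l else 0)
    (hstar : ∀ i j, star (eM i j) = eM j i)
    (hsum : (∑ i, eM i i) = 1)
    (ι : R →⋆ₐ[ℂ] M1)
    (hιinj : Function.Injective ι)
    (hιcomm : ∀ (r : R) i j, ι r * eM i j = eM i j * ι r)
    (hspan : ∀ x : M1, ∃ a : Fin n → Fin n → R, x = ∑ i, ∑ j, ι (a i j) * eM i j)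
    (hιtr : ∀ (r : R) i j, trM (ι r * eM i j) = if i = j then ((n : ℂ))⁻¹ * trR r else 0)
    (ω : Ultrafilter ℕ) (hω : IsFreeUltrafilter ω)
    (π : (ℕ → M1) → N) (hπ : IsUltrapower ω trM trN π)
    :
    -- for every representative `γ` of an element of `G` ...
    ∀ γ : R ≃ₐ[ℂ] R,
      (∃ β ∈ Subgroup.closure (Set.range α), ∃ u ∈ unitary R,
        ∀ r : R, γ r = u * β r * star u) →
    -- ... extended to `M₁` as `γ ⊗ id` ...
    ∀ γM : M1 ≃ₐ[ℂ] M1,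
      (∀ r : R, γM (ι r) = ι (γ r)) → (∀ i j, γM (eM i j) = eM i j) →
    -- ... the induced pointwise automorphism of `M₁^ω` fixes every element of
    -- `M₀^ω ∩ M₁'`:
    ∀ x : ℕ → M1, BddSeq x →
      (∀ m, x m ∈ Set.range (fun r : R => ∑ i, ι ((α i) r) * eM i i)) →
      π x ∈ commutantSet (Set.range (uConst π)) →
      BddSeq (fun m => γM (x m)) →
      π (fun m => γM (x m)) = π x := by
  intro γ hγex γM hγι hγe x hbx hxmem hxcomm hbγx
  obtain ⟨β, hβmem, u, huU, hγdef⟩ := hγex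
  obtain ⟨huL, huR⟩ := Unitary.mem_iff.mp huU
  have htrR := hR.tracial
  have htrM := hM.tracial
  set z : Fin n := ⟨0, hn⟩ with hz
  choose y hy using hxmem
  have hy' : ∀ m, x m = ∑ i, ι (α i (y m)) * eM i i := fun m => (hy m).symm
  have hn0 : (n : ℝ) ≠ 0 := Nat.cast_ne_zero.mpr hn.ne'
  have hninv : (0:ℝ) ≤ (n:ℝ)⁻¹ := by positivity
  have cN : Real.sqrt (n:ℝ) * Real.sqrt ((n:ℝ)⁻¹) = 1 := by
    rw [← Real.sqrt_mul (by positivity), mul_inv_cancel₀ hn0, Real.sqrt_one]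
  have star_ie : ∀ (r : R) (i j : Fin n), star (ι r * eM i j) = ι (star r) * eM j i := by
    intro r i j
    rw [star_mul, hstar, ← map_star, ← hιcomm]
  have mul_ie : ∀ (r s : R) (i j k l : Fin n),
      (ι r * eM i j) * (ι s * eM k l) = ι (r * s) * (if j = k then eM i l else 0) := by
    intro r s i j k l
    rw [map_mul, ← hmul i j k l]
    calc ι r * eM i j * (ι s * eM k l) = ι r * (eM i j * ι s) * eM k l := by noncomm_ring
    _ = ι r * (ι s * eM i j) * eM k l := by rw [← hιcomm]
    _ = ι r * ι s * (eM i j * eM k l) := by noncomm_ring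
  have star_sum_diag : ∀ (c : Fin n → R),
      star (∑ i, ι (c i) * eM i i) = ∑ i, ι (star (c i)) * eM i i := by
    intro c
    rw [star_sum]
    exact Finset.sum_congr rfl fun i _ => star_ie _ i i
  have sq_diag : ∀ (c d : Fin n → R),
      (∑ i, ι (c i) * eM i i) * (∑ i, ι (d i) * eM i i) = ∑ i, ι (c i * d i) * eM i i := by
    intro c d
    rw [Finset.sum_mul_sum]
    refine Finset.sum_congr rfl fun i _ => ?_
    calc ∑ j, (ι (c i) * eM i i) * (ι (d j) * eM j j)
        = ∑ j, ι (c i * d j) * (if i = j then eM i j else 0) :=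
          Finset.sum_congr rfl fun j _ => mul_ie _ _ i i j j
    _ = ι (c i * d i) * eM i i := by
        simp only [mul_ite, mul_zero, Finset.sum_ite_eq, Finset.mem_univ, if_true]
  have tr_diag : ∀ (c : Fin n → R),
      trM (∑ i, ι (c i) * eM i i) = (n:ℂ)⁻¹ * ∑ i, trR (c i) := by
    intro c
    rw [map_sum, Finset.mul_sum]
    exact Finset.sum_congr rfl fun i _ => by rw [hιtr]; simp
  have re_diag : ∀ (c : Fin n → R),
      (trM (star (∑ i, ι (c i) * eM i i) * (∑ i, ι (c i) * eM i i))).re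
        = (n:ℝ)⁻¹ * ∑ i, nrm2 trR (c i) ^ 2 := by
    intro c
    rw [star_sum_diag, sq_diag, tr_diag]
    have hcast : ((n:ℂ))⁻¹ = (((n:ℝ)⁻¹ : ℝ) : ℂ) := by push_cast; ring
    rw [hcast, Complex.re_ofReal_mul, Complex.re_sum]
    congr 1
    exact Finset.sum_congr rfl fun i _ => my_re_sq htrR _
  have nrm2_diag_lower : ∀ (c : Fin n → R) (j : Fin n),
      nrm2 trR (c j) ≤ Real.sqrt n * nrm2 trM (∑ i, ι (c i) * eM i i) := by
    intro c j
    have h1 : nrm2 trR (c j) ^ 2 ≤ ∑ i, nrm2 trR (c i) ^ 2 :=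
      Finset.single_le_sum (f := fun i => nrm2 trR (c i) ^ 2)
        (fun i _ => sq_nonneg _) (Finset.mem_univ j)
    have h2 : (n:ℝ) * ((n:ℝ)⁻¹ * ∑ i, nrm2 trR (c i) ^ 2) = ∑ i, nrm2 trR (c i) ^ 2 := by
      field_simp
    calc nrm2 trR (c j) = Real.sqrt (nrm2 trR (c j) ^ 2) := (Real.sqrt_sq (my_nrm2_nonneg _)).symm
    _ ≤ Real.sqrt ((n:ℝ) * ((n:ℝ)⁻¹ * ∑ i, nrm2 trR (c i) ^ 2)) :=
        Real.sqrt_le_sqrt (by rw [h2]; exact h1)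
    _ = Real.sqrt n * Real.sqrt ((n:ℝ)⁻¹ * ∑ i, nrm2 trR (c i) ^ 2) :=
        Real.sqrt_mul (by positivity) _
    _ = Real.sqrt n * nrm2 trM (∑ i, ι (c i) * eM i i) := by rw [← re_diag]; rfl
  have re_ie : ∀ (r : R) (i j : Fin n),
      (trM (star (ι r * eM i j) * (ι r * eM i j))).re = (n:ℝ)⁻¹ * nrm2 trR r ^ 2 := by
    intro r i j
    rw [star_ie, mul_ie, if_pos rfl, hιtr, if_pos rfl]
    have hcast : ((n:ℂ))⁻¹ = (((n:ℝ)⁻¹ : ℝ) : ℂ) := by push_cast; ring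
    rw [hcast, Complex.re_ofReal_mul, my_re_sq htrR]
  have nrm2_ie : ∀ (r : R) (i j : Fin n),
      nrm2 trM (ι r * eM i j) = Real.sqrt ((n:ℝ)⁻¹) * nrm2 trR r := by
    intro r i j
    show Real.sqrt _ = _
    rw [re_ie, Real.sqrt_mul hninv, Real.sqrt_sq (my_nrm2_nonneg _)]
  -- commutator estimate from the relative-commutant hypothesis
  have hbconst : ∀ a : M1, BddSeq (fun _ : ℕ => a) := fun a => ⟨‖a‖, fun _ => le_rfl⟩
  obtain ⟨C, hC⟩ := hbx
  have hbxa : ∀ a : M1, BddSeq (fun m => x m * a) := fun a =>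
    ⟨C * ‖a‖, fun m => le_trans (norm_mul_le _ _)
      (mul_le_mul_of_nonneg_right (hC m) (norm_nonneg a))⟩
  have hbax : ∀ a : M1, BddSeq (fun m => a * x m) := fun a =>
    ⟨‖a‖ * C, fun m => le_trans (norm_mul_le _ _)
      (mul_le_mul_of_nonneg_left (hC m) (norm_nonneg a))⟩
  have hcomm2 : ∀ a : M1,
      Filter.Tendsto (fun m => nrm2 trM (x m * a - a * x m)) ω (nhds 0) := by
    intro a
    have h1 : π (fun m => x m * a) = π (fun m => a * x m) := by
      have h2 := hxcomm (uConst π a) ⟨a, rfl⟩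
      have h3 := hπ.map_mul x (fun _ => a) ⟨C, hC⟩ (hbconst a)
      have h4 := hπ.map_mul (fun _ => a) x (hbconst a) ⟨C, hC⟩
      rw [h3, h4]
      exact h2.symm
    exact (hπ.eq_iff _ _ (hbxa a) (hbax a)).mp h1
  have diffE : ∀ (j : Fin n) (m : ℕ),
      x m * eM j z - eM j z * x m = ι (α j (y m) - y m) * eM j z := by
    intro j m
    rw [hy' m]
    have h1 : (∑ i, ι (α i (y m)) * eM i i) * eM j z = ι (α j (y m)) * eM j z := by
      rw [Finset.sum_mul]
      have hterm : ∀ i : Fin n, (ι (α i (y m)) * eM i i) * eM j z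
          = if i = j then ι (α i (y m)) * eM i z else 0 := by
        intro i
        rw [mul_assoc, hmul]
        by_cases hij : i = j <;> simp [hij]
      simp only [hterm]
      rw [Finset.sum_ite_eq']
      simp
    have h2 : eM j z * (∑ i, ι (α i (y m)) * eM i i) = ι (y m) * eM j z := by
      rw [Finset.mul_sum]
      have hterm : ∀ i : Fin n, eM j z * (ι (α i (y m)) * eM i i)
          = if z = i then ι (α i (y m)) * eM j i else 0 := by
        intro i
        rw [← mul_assoc, ← hιcomm, mul_assoc, hmul]
        by_cases hzi : z = i <;> simp [hzi]
      simp only [hterm]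
      rw [Finset.sum_ite_eq]
      simp [hα0]
    rw [h1, h2, map_sub, sub_mul]
  have T1 : ∀ j : Fin n,
      Filter.Tendsto (fun m => nrm2 trR (α j (y m) - y m)) ω (nhds 0) := by
    intro j
    have h1 := hcomm2 (eM j z)
    have h2 : Filter.Tendsto
        (fun m => Real.sqrt ((n:ℝ)⁻¹) * nrm2 trR (α j (y m) - y m)) ω (nhds 0) := by
      refine h1.congr fun m => ?_
      rw [diffE j m, nrm2_ie]
    have h3 := h2.const_mul (Real.sqrt (n:ℝ))
    rw [mul_zero] at h3
    refine h3.congr fun m => ?_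
    rw [← mul_assoc, cN, one_mul]
  have diffU : ∀ m, x m * ι u - ι u * x m
      = ∑ i, ι (α i (y m) * u - u * α i (y m)) * eM i i := by
    intro m
    rw [hy' m, Finset.sum_mul, Finset.mul_sum, ← Finset.sum_sub_distrib]
    refine Finset.sum_congr rfl fun i _ => ?_
    rw [map_sub, sub_mul]
    congr 1
    · rw [mul_assoc, ← hιcomm, ← mul_assoc, ← map_mul]
    · rw [← mul_assoc, ← map_mul]
  have T2 : Filter.Tendsto (fun m => nrm2 trR (y m * u - u * y m)) ω (nhds 0) := by
    have h1 := hcomm2 (ι u)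
    have hg := h1.const_mul (Real.sqrt (n:ℝ))
    rw [mul_zero] at hg
    refine squeeze_zero (fun m => my_nrm2_nonneg _) (fun m => ?_) hg
    have h2 := nrm2_diag_lower (fun i => α i (y m) * u - u * α i (y m)) z
    rw [← diffU m] at h2
    simpa [hα0] using h2
  have iso : ∀ β' : R ≃ₐ[ℂ] R, (∀ r, β' (star r) = star (β' r)) →
      (∀ r, trR (β' r) = trR r) → ∀ a, nrm2 trR (β' a) = nrm2 trR a := by
    intro β' hst htr a
    unfold nrm2
    rw [← hst, ← map_mul, htr]
  have PB : ∀ β' ∈ Subgroup.closure (Set.range α),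
      (∀ r, β' (star r) = star (β' r)) ∧ (∀ r, trR (β' r) = trR r) ∧
        Filter.Tendsto (fun m => nrm2 trR (β' (y m) - y m)) ω (nhds 0) := by
    intro β' hβ'
    refine Subgroup.closure_induction (fun g hg => ?_) ?_
      (fun g g' hg hg' ihg ihg' => ?_) (fun g hg ihg => ?_) hβ'
    · obtain ⟨i, rfl⟩ := hg
      exact ⟨hαstar i, hαtr i, T1 i⟩
    · refine ⟨fun r => rfl, fun r => rfl, ?_⟩
      have hzero : (fun m => nrm2 trR ((1 : R ≃ₐ[ℂ] R) (y m) - y m)) = fun _ => (0:ℝ) := by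
        funext m
        simp [my_nrm2_zero]
      rw [hzero]
      exact tendsto_const_nhds
    · obtain ⟨hst, htr, hT⟩ := ihg
      obtain ⟨hst', htr', hT'⟩ := ihg'
      refine ⟨fun r => by rw [AlgEquiv.mul_apply, AlgEquiv.mul_apply, hst', hst],
              fun r => by rw [AlgEquiv.mul_apply, htr, htr'], ?_⟩
      have hbound : ∀ m, nrm2 trR ((g * g') (y m) - y m)
          ≤ nrm2 trR (g' (y m) - y m) + nrm2 trR (g (y m) - y m) := by
        intro m
        have hsplit : (g * g') (y m) - y m = g (g' (y m) - y m) + (g (y m) - y m) := by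
          rw [AlgEquiv.mul_apply, map_sub]
          abel
        rw [hsplit]
        calc nrm2 trR _ ≤ nrm2 trR (g (g' (y m) - y m)) + nrm2 trR (g (y m) - y m) :=
              my_nrm2_add_le htrR _ _
        _ = _ := by rw [iso g hst htr]
      have hg0 := hT'.add hT
      rw [add_zero] at hg0
      exact squeeze_zero (fun m => my_nrm2_nonneg _) hbound hg0
    · obtain ⟨hst, htr, hT⟩ := ihg
      have happ : ∀ r, g (g⁻¹ r) = r := fun r => by
        rw [← AlgEquiv.mul_apply, mul_inv_cancel, AlgEquiv.one_apply]
      have happ' : ∀ r, g⁻¹ (g r) = r := fun r => by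
        rw [← AlgEquiv.mul_apply, inv_mul_cancel, AlgEquiv.one_apply]
      have hstinv : ∀ r, g⁻¹ (star r) = star (g⁻¹ r) := by
        intro r
        conv_lhs => rw [← happ r]
        rw [← hst, happ']
      have htrinv : ∀ r, trR (g⁻¹ r) = trR r := fun r => by
        conv_rhs => rw [← happ r]
        rw [htr]
      refine ⟨hstinv, htrinv, ?_⟩
      have heq : ∀ m, nrm2 trR (g⁻¹ (y m) - y m) = nrm2 trR (g (y m) - y m) := by
        intro m
        have h1 : g⁻¹ (y m) - y m = g⁻¹ (y m - g (y m)) := by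
          rw [map_sub, happ']
        rw [h1, iso g⁻¹ hstinv htrinv,
          show y m - g (y m) = -(g (y m) - y m) from (neg_sub _ _).symm, my_nrm2_neg]
      exact hT.congr fun m => (heq m).symm
  have Tcomm' : Filter.Tendsto (fun m => nrm2 trR (u * y m - y m * u)) ω (nhds 0) := by
    refine T2.congr fun m => ?_
    rw [show y m * u - u * y m = -(u * y m - y m * u) from (neg_sub _ _).symm, my_nrm2_neg]
  have hsu : star u * star (star u) = 1 := by rw [star_star]; exact huL
  have stepC : ∀ i : Fin n,
      Filter.Tendsto (fun m => nrm2 trR (γ (α i (y m)) - α i (y m))) ω (nhds 0) := by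
    intro i
    have hαmem : α i ∈ Subgroup.closure (Set.range α) := Subgroup.subset_closure ⟨i, rfl⟩
    obtain ⟨hsti, htri, hTi⟩ := PB (α i) hαmem
    obtain ⟨hstm, htrm, hTm⟩ := PB (β * α i) (mul_mem hβmem hαmem)
    have hbound : ∀ m, nrm2 trR (γ (α i (y m)) - α i (y m))
        ≤ nrm2 trR ((β * α i) (y m) - y m)
          + (nrm2 trR (u * y m - y m * u) + nrm2 trR (α i (y m) - y m)) := by
      intro m
      have hsplit : γ (α i (y m)) - α i (y m)
          = u * ((β * α i) (y m) - y m) * star u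
            + ((u * y m - y m * u) * star u + -(α i (y m) - y m)) := by
        rw [hγdef, AlgEquiv.mul_apply]
        have h1 : (u * y m - y m * u) * star u = u * y m * star u - y m := by
          rw [sub_mul, mul_assoc (y m), huR, mul_one]
        have h2 : u * (β (α i (y m)) - y m) * star u
            = u * β (α i (y m)) * star u - u * y m * star u := by
          rw [mul_sub, sub_mul]
        rw [h1, h2]
        abel
      rw [hsplit]
      refine le_trans (my_nrm2_add_le htrR _ _) ?_
      refine add_le_add ?_ (le_trans (my_nrm2_add_le htrR _ _) (add_le_add ?_ ?_))
      · refine le_of_eq ?_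
        rw [mul_assoc, my_nrm2_mul_left htrR huL, my_nrm2_mul_right htrR hsu]
      · exact le_of_eq (my_nrm2_mul_right htrR hsu _)
      · exact le_of_eq (my_nrm2_neg _)
    have hg0 := hTm.add (Tcomm'.add hTi)
    rw [add_zero, add_zero] at hg0
    exact squeeze_zero (fun m => my_nrm2_nonneg _) hbound hg0
  have diffG : ∀ m, γM (x m) - x m = ∑ i, ι (γ (α i (y m)) - α i (y m)) * eM i i := by
    intro m
    conv_lhs => rw [hy' m]
    rw [map_sum, ← Finset.sum_sub_distrib]
    refine Finset.sum_congr rfl fun i _ => ?_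
    rw [map_mul, hγι, hγe, map_sub, sub_mul]
  have Tfin : Filter.Tendsto (fun m => nrm2 trM (γM (x m) - x m)) ω (nhds 0) := by
    have hg : Filter.Tendsto
        (fun m => ∑ i : Fin n, Real.sqrt ((n:ℝ)⁻¹) * nrm2 trR (γ (α i (y m)) - α i (y m)))
        ω (nhds 0) := by
      have h := tendsto_finset_sum (Finset.univ : Finset (Fin n))
        (fun i _ => (stepC i).const_mul (Real.sqrt ((n:ℝ)⁻¹)))
      simpa using h
    refine squeeze_zero (fun m => my_nrm2_nonneg _) (fun m => ?_) hg
    rw [diffG m]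
    refine le_trans (my_nrm2_sum_le htrM _ _) ?_
    exact le_of_eq (Finset.sum_congr rfl fun i _ => nrm2_ie _ i i)
  exact (hπ.eq_iff _ _ hbγx ⟨C, hC⟩).mpr Tfin
end
end

section
/- Let H and K be finite groups with outer actions on the hyperfinite II₁ factor R, and let G = H ∗ K / (Int R ∩ H ∗ K) be the image of the free product H ∗ K in Out R. Then for any free ultrafilter ω, the central sequence algebra (R^H)^ω ∩ (R ⋊ K)' of the Bisch–Haagerup subfactor R^H ⊂ R ⋊ K is contained in (R_ω)^G, the fixed points of the induced pointwise action of G on R_ω. -/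
open scoped ENNReal

noncomputable section

section Aux

variable {A : Type*} [NormedRing A] [StarRing A] [CStarRing A] [NormedAlgebra ℂ A]
  [StarModule ℂ A] [CompleteSpace A]
variable {B : Type*} [NormedRing B] [StarRing B] [CStarRing B] [NormedAlgebra ℂ B]
  [StarModule ℂ B] [CompleteSpace B]

private noncomputable def auxCStar : CStarAlgebra A :=
  { toNormedRing := ‹_›, toStarRing := ‹_›, toCompleteSpace := ‹_›, toCStarRing := ‹_›,
    toNormedAlgebra := ‹_›, toStarModule := ‹_› }

private lemma aux_theta_norm (θ : A →⋆ₐ[ℂ] B) (hinj : Function.Injective θ) (a : A) :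
    ‖θ a‖ = ‖a‖ := by
  letI : CStarAlgebra A := auxCStar
  letI : CStarAlgebra B := auxCStar
  exact NonUnitalStarAlgHom.norm_map θ hinj a

private lemma aux_equiv_norm (β : A ≃ₐ[ℂ] A) (hs : ∀ s, β (star s) = star (β s)) (a : A) :
    ‖β a‖ = ‖a‖ := by
  letI : CStarAlgebra A := auxCStar
  have h1 : ∀ (γ : A ≃ₐ[ℂ] A), (∀ s, γ (star s) = star (γ s)) → ∀ x : A, ‖γ x‖ ≤ ‖x‖ := by
    intro γ hγ x
    exact NonUnitalStarAlgHom.norm_apply_le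
      ({ γ.toAlgHom with map_star' := hγ } : A →⋆ₐ[ℂ] A) x
  have hsymm : ∀ s, β.symm (star s) = star (β.symm s) := by
    intro s
    apply β.injective
    rw [β.apply_symm_apply, hs, β.apply_symm_apply]
  refine le_antisymm (h1 β hs a) ?_
  have := h1 β.symm hsymm (β a)
  rwa [β.symm_apply_apply] at this

end Aux


/-- Let `H` and `K` be finite groups with outer actions on the
hyperfinite II₁ factor `R`, and let `G = H ∗ K / (Int R ∩ H ∗ K)` be the image of
the free product in `Out R`.  Then for any free ultrafilter `ω`, the central
sequence algebra `(R^H)^ω ∩ (R ⋊ K)'` of the Bisch–Haagerup subfactor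
`R^H ⊂ R ⋊ K` is contained in `(R_ω)^G`, the fixed points of the induced pointwise
action of `G` on `R_ω` (i.e. fixed by the pointwise ultrapower of every
representative in `Aut R` of every element of `G`). -/
theorem bisch_haagerup_central_sequences_are_G_fixed
    {R : Type*} [NormedRing R] [StarRing R] [CStarRing R] [NormedAlgebra ℂ R] [StarModule ℂ R] [PartialOrder R] [StarOrderedRing R] [CompleteSpace R]
    {P : Type*} [NormedRing P] [StarRing P] [CStarRing P] [NormedAlgebra ℂ P] [StarModule ℂ P] [PartialOrder P] [StarOrderedRing P] [CompleteSpace P]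
    {N : Type*} [NormedRing N] [StarRing N] [CStarRing N] [NormedAlgebra ℂ N] [StarModule ℂ N] [PartialOrder N] [StarOrderedRing N] [CompleteSpace N]
    (trR : R →ₗ[ℂ] ℂ) (trP : P →ₗ[ℂ] ℂ) (trN : N →ₗ[ℂ] ℂ)
    -- `R` is the hyperfinite II₁ factor:
    (hR : IsII1Factor trR) (hRhyp : IsHyperfiniteSet trR (Set.univ : Set R))
    -- `P = R ⋊ K` is a II₁ factor:
    (hP : IsII1Factor trP)
    {H K : Type*} [Group H] [Fintype H] [Group K] [Fintype K]
    -- outer actions of the finite groups `H` and `K` on `R`: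
    (αH : H →* (R ≃ₐ[ℂ] R)) (αK : K →* (R ≃ₐ[ℂ] R))
    (hHstar : ∀ h (r : R), αH h (star r) = star (αH h r))
    (hKstar : ∀ k (r : R), αK k (star r) = star (αK k r))
    (hHtr : ∀ h (r : R), trR (αH h r) = trR r)
    (hKtr : ∀ k (r : R), trR (αK k r) = trR r)
    (hHouter : ∀ h : H, h ≠ 1 → ¬ ∃ u ∈ unitary R, ∀ r : R, αH h r = u * r * star u)
    (hKouter : ∀ k : K, k ≠ 1 → ¬ ∃ u ∈ unitary R, ∀ r : R, αK k r = u * r * star u)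
    -- the embedding of `R` into the crossed product `P = R ⋊ K`:
    (θ : R →⋆ₐ[ℂ] P) (hθinj : Function.Injective θ)
    (hθtr : ∀ r : R, trP (θ r) = trR r)
    (uK : K → P)
    (hu1 : uK 1 = 1) (humul : ∀ k l : K, uK (k * l) = uK k * uK l)
    (huni : ∀ k : K, uK k ∈ unitary P)
    (hcov : ∀ (k : K) (r : R), uK k * θ r * star (uK k) = θ (αK k r))
    (hgen : ∀ p : P, ∀ ε : ℝ, 0 < ε →
      ∃ y ∈ Submodule.span ℂ {z : P | ∃ r : R, ∃ k : K, z = θ r * uK k},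
        nrm2 trP (p - y) < ε)
    (htr0 : ∀ k : K, k ≠ 1 → ∀ r : R, trP (θ r * uK k) = 0)
    (ω : Ultrafilter ℕ) (hω : IsFreeUltrafilter ω)
    (π : (ℕ → P) → N) (hπ : IsUltrapower ω trP trN π)
    :
    uSet π ((fun r : R => θ r) '' {r : R | ∀ h : H, αH h r = r}) ∩
        commutantSet (Set.range (uConst π)) ⊆
      {y : N |
        y ∈ uSet π (Set.range (fun r : R => θ r)) ∧
        y ∈ commutantSet (uConst π '' Set.range (fun r : R => θ r)) ∧
        ∀ γ : R ≃ₐ[ℂ] R,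
          (∃ β ∈ Subgroup.closure
              (Set.range (fun h : H => αH h) ∪ Set.range (fun k : K => αK k)),
            ∃ v ∈ unitary R, ∀ r : R, γ r = v * β r * star v) →
          ∀ x : ℕ → R, BddSeq (fun m => θ (x m)) → π (fun m => θ (x m)) = y →
            BddSeq (fun m => θ (γ (x m))) → π (fun m => θ (γ (x m))) = y} := by
  intro y hy
  obtain ⟨hy1, hy2⟩ := hy
  obtain ⟨x₀, hx₀bdd, hx₀mem, hx₀π⟩ := hy1
  choose r hrfix hrθ using hx₀mem
  have hθn : ∀ a : R, ‖θ a‖ = ‖a‖ := aux_theta_norm θ hθinj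
  have hrseq : (fun m => θ (r m)) = x₀ := funext hrθ
  have hrbdd : BddSeq (fun m => θ (r m)) := hrseq ▸ hx₀bdd
  have hrπ : π (fun m => θ (r m)) = y := by rw [hrseq]; exact hx₀π
  -- `nrm2` identities
  have hn1 : ∀ s : R, nrm2 trP (θ s) = nrm2 trR s := by
    intro s
    unfold nrm2
    rw [← map_star θ, ← map_mul θ, hθtr]
  have hn2 : ∀ (β : R ≃ₐ[ℂ] R), (∀ s, β (star s) = star (β s)) → (∀ s, trR (β s) = trR s) →
      ∀ s : R, nrm2 trR (β s) = nrm2 trR s := by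
    intro β hs htr s
    unfold nrm2
    rw [← hs, ← map_mul β, htr]
  -- boundedness transfer along star-preserving automorphisms
  have hBmove : ∀ (β : R ≃ₐ[ℂ] R), (∀ s, β (star s) = star (β s)) →
      ∀ a : ℕ → R, BddSeq (fun m => θ (a m)) → BddSeq (fun m => θ (β (a m))) := by
    rintro β hs a ⟨C, hC⟩
    exact ⟨C, fun n => by rw [hθn, aux_equiv_norm β hs, ← hθn]; exact hC n⟩
  -- the key transfer lemma: π ∘ θ ∘ β only depends on the class in the ultrapower
  have L : ∀ (β : R ≃ₐ[ℂ] R), (∀ s, β (star s) = star (β s)) → (∀ s, trR (β s) = trR s) →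
      ∀ a b : ℕ → R, BddSeq (fun m => θ (a m)) → BddSeq (fun m => θ (b m)) →
      π (fun m => θ (a m)) = π (fun m => θ (b m)) →
      π (fun m => θ (β (a m))) = π (fun m => θ (β (b m))) := by
    intro β hs htrb a b hBa hBb hab
    refine (hπ.eq_iff _ _ (hBmove β hs a hBa) (hBmove β hs b hBb)).mpr ?_
    have h0 := (hπ.eq_iff _ _ hBa hBb).mp hab
    have heq : (fun m => nrm2 trP (θ (β (a m)) - θ (β (b m)))) =
        fun m => nrm2 trP (θ (a m) - θ (b m)) := by
      funext m
      rw [← map_sub θ, ← map_sub β, hn1, hn2 β hs htrb, ← hn1, map_sub θ]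
    rw [heq]
    exact h0
  -- boundedness helpers
  have hBconst : ∀ p : P, BddSeq (fun _ : ℕ => p) := fun p => ⟨‖p‖, fun _ => le_rfl⟩
  have hBmul : ∀ a b : ℕ → P, BddSeq a → BddSeq b → BddSeq (fun m => a m * b m) := by
    rintro a b ⟨C, hC⟩ ⟨D, hD⟩
    refine ⟨C * D, fun n => (norm_mul_le _ _).trans ?_⟩
    exact mul_le_mul (hC n) (hD n) (norm_nonneg _) (le_trans (norm_nonneg _) (hC 0))
  have hucmul : ∀ p q : P, uConst π p * uConst π q = uConst π (p * q) := fun p q =>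
    (hπ.map_mul _ _ (hBconst p) (hBconst q)).symm
  have huc1 : uConst π 1 = 1 := hπ.map_one
  have hycomm : ∀ p : P, uConst π p * y = y * uConst π p := fun p => hy2 _ ⟨p, rfl⟩
  -- conjugation by a unitary constant fixes y
  have hconj : ∀ u ∈ unitary P, ∀ z : ℕ → P, BddSeq z → π z = y →
      π (fun m => u * z m * star u) = y := by
    intro u hu z hBz hz
    have e1 : π (fun m => u * z m) = uConst π u * π z := hπ.map_mul _ _ (hBconst u) hBz
    have e2 : π (fun m => u * z m * star u) = π (fun m => u * z m) * uConst π (star u) :=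
      hπ.map_mul _ _ (hBmul _ _ (hBconst u) hBz) (hBconst (star u))
    rw [e2, e1, hz, hycomm u, mul_assoc, hucmul, (Unitary.mem_iff.mp hu).2, huc1, mul_one]
  -- main induction over the closure
  have hkeyall : ∀ β ∈ Subgroup.closure
      (Set.range (fun h : H => αH h) ∪ Set.range (fun k : K => αK k)),
      (∀ s : R, β (star s) = star (β s)) ∧ (∀ s : R, trR (β s) = trR s) ∧
        π (fun m => θ (β (r m))) = y := by
    intro β hβ
    induction hβ using Subgroup.closure_induction with
    | mem g hg =>
      rcases hg with ⟨h, rfl⟩ | ⟨k, rfl⟩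
      · refine ⟨hHstar h, hHtr h, ?_⟩
        have e : (fun m => θ (αH h (r m))) = fun m => θ (r m) :=
          funext fun m => by rw [hrfix m h]
        rw [e]
        exact hrπ
      · refine ⟨hKstar k, hKtr k, ?_⟩
        have e : (fun m => θ (αK k (r m))) = fun m => uK k * θ (r m) * star (uK k) :=
          funext fun m => (hcov k (r m)).symm
        rw [e]
        exact hconj (uK k) (huni k) _ hrbdd hrπ
    | one => exact ⟨fun s => rfl, fun s => rfl, hrπ⟩
    | mul g₁ g₂ hg₁ hg₂ ih₁ ih₂ =>
      obtain ⟨hs₁, ht₁, hy₁⟩ := ih₁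
      obtain ⟨hs₂, ht₂, hy₂'⟩ := ih₂
      refine ⟨fun s => by rw [AlgEquiv.mul_apply, AlgEquiv.mul_apply, hs₂, hs₁],
        fun s => by rw [AlgEquiv.mul_apply, ht₁, ht₂], ?_⟩
      have h2 := L g₁ hs₁ ht₁ (fun m => g₂ (r m)) r (hBmove g₂ hs₂ r hrbdd) hrbdd
        (hy₂'.trans hrπ.symm)
      exact h2.trans hy₁
    | inv g hg ih =>
      obtain ⟨hs, ht, hyg⟩ := ih
      have e : ∀ t, g (g⁻¹ t) = t := fun t => g.apply_symm_apply t
      have hsinv : ∀ s, g⁻¹ (star s) = star (g⁻¹ s) := by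
        intro s
        apply g.injective
        rw [e, hs, e]
      have htinv : ∀ s, trR (g⁻¹ s) = trR s := fun s => by
        calc trR (g⁻¹ s) = trR (g (g⁻¹ s)) := (ht _).symm
        _ = trR s := by rw [e]
      refine ⟨hsinv, htinv, ?_⟩
      have h2 := L g⁻¹ hsinv htinv (fun m => g (r m)) r (hBmove g hs r hrbdd) hrbdd
        (hyg.trans hrπ.symm)
      have e' : ∀ t, g⁻¹ (g t) = t := fun t => g.injective (by rw [e])
      have e2 : (fun m => θ (g⁻¹ (g (r m)))) = fun m => θ (r m) :=
        funext fun m => by rw [e']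
      rw [e2] at h2
      exact h2.symm.trans hrπ
  refine ⟨⟨fun m => θ (r m), hrbdd, fun m => ⟨r m, rfl⟩, hrπ⟩, ?_, ?_⟩
  · rintro s ⟨p, -, rfl⟩
    exact hy2 _ ⟨p, rfl⟩
  · rintro γ ⟨β, hβmem, v, hv, hγ⟩ x hxbdd hxπ hbdd2
    obtain ⟨hs, ht, hβy⟩ := hkeyall β hβmem
    have hβx : π (fun m => θ (β (x m))) = y :=
      (L β hs ht x r hxbdd hrbdd (hxπ.trans hrπ.symm)).trans hβy
    have hθv : θ v ∈ unitary P := by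
      rw [Unitary.mem_iff] at hv ⊢
      constructor
      · rw [← map_star θ, ← map_mul θ, hv.1, map_one]
      · rw [← map_star θ, ← map_mul θ, hv.2, map_one]
    have heq : (fun m => θ (γ (x m))) = fun m => θ v * θ (β (x m)) * star (θ v) := by
      funext m
      rw [hγ, map_mul θ, map_mul θ, map_star θ]
    rw [heq]
    exact hconj (θ v) hθv _ (hBmove β hs x hxbdd) hβx
end
end

section
/- Let A₀ ⊂ A₁ ⊂ A₂ ⊂ ... be the Jones tower arising from a connected inclusion of finite-dimensional von Neumann algebras with Markov trace, with Markov constant τ = tr(eᵢ), and let s^{(n)} and t^{(n)} denote the size and trace vectors of A_n under the standard consistent labeling of central projections. Then lim_{k→∞} τ^k s^{(i+2k)} = ‖t^{(i)}‖^{-2} t^{(i)}, and t^{(i+2k)} = τ^k t^{(i)} for all k ≥ 0. -/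
open scoped ENNReal

noncomputable section

/-- Spectral gap lemma: for a symmetric matrix `M` with a strictly positive power,
a positive eigenvector `t` with eigenvalue `ρ > 0`, any eigenvector orthogonal
to `t` has eigenvalue of absolute value strictly less than `ρ`. -/
lemma aux_gap {ι : Type*} [Fintype ι] [DecidableEq ι] [Nonempty ι]
    (M : Matrix ι ι ℝ) (hsym : M.transpose = M) (m : ℕ)
    (hpos : ∀ a b, 0 < (M ^ (m + 1)) a b)
    (t : ι → ℝ) (ht : ∀ a, 0 < t a) (ρ : ℝ) (hρ : 0 ≤ ρ)
    (hMt : M.mulVec t = ρ • t)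
    (v : ι → ℝ) (lam : ℝ) (hMv : M.mulVec v = lam • v)
    (hv : v ≠ 0)
    (horth : ∑ a, v a * t a = 0) : |lam| < ρ := by
  set n := m + 1 with hn
  have hpow : ∀ (w : ι → ℝ) (c : ℝ), M.mulVec w = c • w →
      ∀ k : ℕ, (M ^ k).mulVec w = c ^ k • w := by
    intro w c hw k
    induction k with
    | zero => simp [Matrix.one_mulVec]
    | succ k ih =>
        rw [pow_succ, ← Matrix.mulVec_mulVec, hw, Matrix.mulVec_smul, ih,
          smul_smul, pow_succ, mul_comm]
  set P := M ^ n with hP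
  have hPt : P.mulVec t = ρ ^ n • t := hpow t ρ hMt n
  have hPv : P.mulVec v = lam ^ n • v := hpow v lam hMv n
  have hPsym : P.transpose = P := by rw [hP, Matrix.transpose_pow, hsym]
  have hPs : ∀ a b, P a b = P b a := fun a b =>
    (congrFun (congrFun hPsym a) b).symm.trans (Matrix.transpose_apply P a b)
  -- v has both a positive and a negative entry
  obtain ⟨c0, hc0⟩ : ∃ c, v c ≠ 0 := Function.ne_iff.mp hv
  have hexpos : ∃ a, 0 < v a := by
    by_contra h
    push_neg at h
    have hlt : ∑ a, v a * t a < ∑ a : ι, (0 : ℝ) :=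
      Finset.sum_lt_sum (fun i _ => mul_nonpos_of_nonpos_of_nonneg (h i) (ht i).le)
        ⟨c0, Finset.mem_univ c0,
          mul_neg_of_neg_of_pos (lt_of_le_of_ne (h c0) hc0) (ht c0)⟩
    simp only [Finset.sum_const_zero] at hlt
    linarith [horth]
  have hexneg : ∃ b, v b < 0 := by
    by_contra h
    push_neg at h
    have hlt : ∑ a : ι, (0 : ℝ) < ∑ a, v a * t a :=
      Finset.sum_lt_sum (fun i _ => mul_nonneg (h i) (ht i).le)
        ⟨c0, Finset.mem_univ c0,
          mul_pos (lt_of_le_of_ne (h c0) (Ne.symm hc0)) (ht c0)⟩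
    simp only [Finset.sum_const_zero] at hlt
    linarith [horth]
  obtain ⟨a0, ha0⟩ := hexpos
  obtain ⟨b0, hb0⟩ := hexneg
  -- pointwise strict triangle inequality
  have key : ∀ c, |lam| ^ n * |v c| < ∑ d, P c d * |v d| := by
    intro c
    have h1 : ∑ d, P c d * v d < ∑ d, P c d * |v d| :=
      Finset.sum_lt_sum (fun i _ => mul_le_mul_of_nonneg_left (le_abs_self _) (hpos c i).le)
        ⟨b0, Finset.mem_univ b0,
          mul_lt_mul_of_pos_left (lt_of_lt_of_le hb0 (abs_nonneg _)) (hpos c b0)⟩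
    have h2 : ∑ d, -(P c d * |v d|) < ∑ d, P c d * v d :=
      Finset.sum_lt_sum
        (fun i _ => by
          have := neg_abs_le (v i)
          nlinarith [hpos c i])
        ⟨a0, Finset.mem_univ a0, by nlinarith [hpos c a0, abs_nonneg (v a0), ha0]⟩
    rw [Finset.sum_neg_distrib] at h2
    have habs : |∑ d, P c d * v d| < ∑ d, P c d * |v d| := abs_lt.mpr ⟨h2, h1⟩
    have hPvc : ∑ d, P c d * v d = lam ^ n * v c := by
      have := congrFun hPv c
      simpa [Matrix.mulVec, dotProduct] using this
    rw [hPvc, abs_mul, abs_pow] at habs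
    exact habs
  -- pair against t
  have hsum : ∑ c, t c * ∑ d, P c d * |v d| = ρ ^ n * ∑ c, t c * |v c| := by
    calc ∑ c, t c * ∑ d, P c d * |v d|
        = ∑ c, ∑ d, t c * (P c d * |v d|) := by
          simp_rw [Finset.mul_sum]
      _ = ∑ d, ∑ c, t c * (P c d * |v d|) := Finset.sum_comm
      _ = ∑ d, (∑ c, P d c * t c) * |v d| := by
          refine Finset.sum_congr rfl fun d _ => ?_
          rw [Finset.sum_mul]
          refine Finset.sum_congr rfl fun c _ => ?_
          rw [hPs d c]
          ring
      _ = ∑ d, (ρ ^ n * t d) * |v d| := by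
          refine Finset.sum_congr rfl fun d _ => ?_
          have := congrFun hPt d
          simp only [Matrix.mulVec, dotProduct, Pi.smul_apply, smul_eq_mul] at this
          rw [this]
      _ = ρ ^ n * ∑ c, t c * |v c| := by
          rw [Finset.mul_sum]
          exact Finset.sum_congr rfl fun d _ => by ring
  have hstrict : ∑ c, t c * (|lam| ^ n * |v c|) < ∑ c, t c * ∑ d, P c d * |v d| :=
    Finset.sum_lt_sum_of_nonempty Finset.univ_nonempty
      (fun c _ => mul_lt_mul_of_pos_left (key c) (ht c))
  have hL : ∑ c, t c * (|lam| ^ n * |v c|) = |lam| ^ n * ∑ c, t c * |v c| := by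
    rw [Finset.mul_sum]
    exact Finset.sum_congr rfl fun c _ => by ring
  rw [hL, hsum] at hstrict
  have hposum : 0 < ∑ c, t c * |v c| :=
    Finset.sum_pos' (fun i _ => mul_nonneg (ht i).le (abs_nonneg _))
      ⟨c0, Finset.mem_univ c0, mul_pos (ht c0) (abs_pos.mpr hc0)⟩
  have hpown : |lam| ^ n < ρ ^ n := by
    have := (mul_lt_mul_iff_left₀ hposum).mp hstrict
    exact this
  exact (pow_lt_pow_iff_left₀ (abs_nonneg lam) hρ (Nat.succ_ne_zero m)).mp hpown



/-- Let `A₀ ⊂ A₁ ⊂ ⋯` be the Jones tower of a connected inclusion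
of finite-dimensional von Neumann algebras with Markov trace, with Markov constant
`τ = tr eᵢ`, inclusion matrix `Λ`, and (under the standard consistent labeling of
central summands) size vectors `s^{(i+2k)} = sE k`, `s^{(i+2k+1)} = sO k` and trace
vectors `t^{(i+2k)} = tE k`, `t^{(i+2k+1)} = tO k`.  Then
`lim_{k→∞} τ^k s^{(i+2k)} = ‖t^{(i)}‖⁻² t^{(i)}` and `t^{(i+2k)} = τ^k t^{(i)}`
for all `k ≥ 0`. -/
theorem perron_frobenius_size_and_trace_vector_asymptotics
    {ι κ : Type*} [Fintype ι] [Fintype κ] [DecidableEq ι] [Nonempty ι] [Nonempty κ]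
    -- the inclusion matrix, with nonnegative integer entries:
    (Λ : Matrix ι κ ℝ) (hΛnn : ∀ a b, 0 ≤ Λ a b)
    (hΛint : ∀ a b, ∃ m : ℕ, Λ a b = m)
    -- connectedness: some power of `ΛΛᵀ` has all entries positive:
    (hconn : ∃ m : ℕ, ∀ a b : ι, 0 < (((Λ * Λ.transpose) ^ (m + 1)) a b))
    (τ : ℝ) (hτ : 0 < τ)
    (sE : ℕ → ι → ℝ) (sO : ℕ → κ → ℝ) (tE : ℕ → ι → ℝ) (tO : ℕ → κ → ℝ)
    -- the inclusion matrices of the tower alternate between `Λ` and `Λᵀ`: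
    (hsO : ∀ k, sO k = Λ.transpose.mulVec (sE k))
    (hsE : ∀ k, sE (k + 1) = Λ.mulVec (sO k))
    (htE : ∀ k, tE k = Λ.mulVec (tO k))
    (htO : ∀ k, tO k = Λ.transpose.mulVec (tE (k + 1)))
    -- sizes are positive, trace vectors are positive:
    (hspos : ∀ a, 0 < sE 0 a)
    (htpos : ∀ k a, 0 < tE k a)
    -- normalization of the trace: `⟨s, t⟩ = 1` at each level:
    (hnorm : ∀ k, ∑ a, sE k a * tE k a = 1)
    -- the Markov condition: the trace vector is the Perron–Frobenius eigenvector of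
    -- `ΛΛᵀ`, with eigenvalue `τ⁻¹ = ‖ΛΛᵀ‖`:
    (hmarkov : (Λ * Λ.transpose).mulVec (tE 0) = τ⁻¹ • tE 0) :
    (∀ k, tE k = τ ^ k • tE 0) ∧
      Filter.Tendsto (fun k => τ ^ k • sE k) Filter.atTop
        (nhds ((∑ a, (tE 0 a) ^ 2)⁻¹ • tE 0)) := by
  classical
  have hτne : τ ≠ 0 := hτ.ne'
  have hτinv : 0 < τ⁻¹ := inv_pos.mpr hτ
  set M := Λ * Λ.transpose with hM
  have hMsymT : M.transpose = M := by
    rw [hM, Matrix.transpose_mul, Matrix.transpose_transpose]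
  obtain ⟨m, hposM⟩ := hconn
  have hMT : ∀ k, M.mulVec (tE (k + 1)) = tE k := by
    intro k
    rw [hM, ← Matrix.mulVec_mulVec, ← htO k, ← htE k]
  -- Part 1
  have hMscale : ∀ j : ℕ, M.mulVec (τ ^ (j + 1) • tE 0) = τ ^ j • tE 0 := by
    intro j
    rw [Matrix.mulVec_smul, ← hM] at *
    rw [hmarkov, smul_smul]
    congr 1
    field_simp
    ring
  have part1 : ∀ k, tE k = τ ^ k • tE 0 := by
    intro k
    induction k with
    | zero => simp
    | succ k ih =>
      set d : ι → ℝ := tE (k + 1) - τ ^ (k + 1) • tE 0 with hd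
      have hMd : M.mulVec d = 0 := by
        rw [hd, Matrix.mulVec_sub, hMT k, hMscale k, ih, sub_self]
      have hdw : M.mulVec (tE (k + 2) - τ ^ (k + 2) • tE 0) = d := by
        rw [Matrix.mulVec_sub, hMT (k + 1), hMscale (k + 1), hd]
      have hvm : Matrix.vecMul d M = M.mulVec d := by
        conv_lhs => rw [← hMsymT]
        rw [Matrix.vecMul_transpose]
      have hdd : dotProduct d d = 0 := by
        nth_rewrite 1 [← hdw]
        rw [dotProduct_comm, Matrix.dotProduct_mulVec, hvm, hMd,
          zero_dotProduct]
      have hz : d = 0 := dotProduct_self_eq_zero.mp hdd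
      have := sub_eq_zero.mp hz
      exact this
  refine ⟨part1, ?_⟩
  -- Part 2
  have hMher : M.IsHermitian := by
    show M.conjTranspose = M
    ext a b
    simp only [Matrix.conjTranspose_apply, star_trivial]
    exact congrFun (congrFun hMsymT a) b
  set b := hMher.eigenvectorBasis with hb
  set μ := hMher.eigenvalues with hμ
  set B : ι → ι → ℝ := fun i => ⇑(b i) with hB
  have hMB : ∀ i, M.mulVec (B i) = μ i • B i := fun i => hMher.mulVec_eigenvectorBasis i
  have hpowB : ∀ (i : ι) (k : ℕ), (M ^ k).mulVec (B i) = μ i ^ k • B i := by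
    intro i k
    induction k with
    | zero => simp [Matrix.one_mulVec]
    | succ k ih =>
        rw [pow_succ, ← Matrix.mulVec_mulVec, hMB, Matrix.mulVec_smul, ih,
          smul_smul, pow_succ, mul_comm]
  have hBne : ∀ i, B i ≠ 0 := by
    intro i hzero
    exact b.orthonormal.ne_zero i (by ext a; exact congrFun hzero a)
  -- inner products as sums
  have hinner : ∀ x y : EuclideanSpace ℝ ι, (inner ℝ x y : ℝ) = ∑ a, x a * y a := by
    intro x y
    simp [PiLp.inner_apply, RCLike.inner_apply]
    exact Finset.sum_congr rfl fun _ _ => mul_comm _ _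
  have hsum_apply : ∀ (f : ι → EuclideanSpace ℝ ι) (a : ι), (∑ i, f i) a = ∑ i, f i a := by
    intro f a
    calc (∑ i, f i) a = (WithLp.linearEquiv 2 ℝ (ι → ℝ) (∑ i, f i)) a := rfl
      _ = (∑ i, WithLp.linearEquiv 2 ℝ (ι → ℝ) (f i)) a := by rw [map_sum]
      _ = ∑ i, f i a := by rw [Finset.sum_apply]; rfl
  set s0 : EuclideanSpace ℝ ι := WithLp.toLp 2 (sE 0) with hs0def
  set t0 : EuclideanSpace ℝ ι := WithLp.toLp 2 (tE 0) with ht0def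
  set c : ι → ℝ := fun i => (inner ℝ (b i) s0 : ℝ) with hc
  set d : ι → ℝ := fun i => ∑ a, B i a * tE 0 a with hdd
  have hcsum : ∀ i, c i = ∑ a, B i a * sE 0 a := by
    intro i; rw [hc]; exact hinner (b i) s0
  have hdinner : ∀ i, (inner ℝ (b i) t0 : ℝ) = d i := by
    intro i; exact hinner (b i) t0
  have hreprs : ∀ a, sE 0 a = ∑ i, c i * B i a := by
    intro a
    have h := congrArg (fun w : EuclideanSpace ℝ ι => w a) (b.sum_repr' s0)
    rw [hsum_apply] at h
    have h2 : ∑ i, ((inner ℝ (b i) s0 : ℝ) • b i) a = ∑ i, c i * B i a :=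
      Finset.sum_congr rfl (fun i _ => rfl)
    rw [h2] at h
    exact h.symm
  have hreprt : ∀ a, tE 0 a = ∑ i, d i * B i a := by
    intro a
    have h := congrArg (fun w : EuclideanSpace ℝ ι => w a) (b.sum_repr' t0)
    rw [hsum_apply] at h
    have h2 : ∑ i, ((inner ℝ (b i) t0 : ℝ) • b i) a = ∑ i, d i * B i a :=
      Finset.sum_congr rfl (fun i _ => by rw [hdinner i]; rfl)
    rw [h2] at h
    exact h.symm
  -- the size vector evolves by powers of M
  have hSk : ∀ k, sE k = (M ^ k).mulVec (sE 0) := by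
    intro k
    induction k with
    | zero => simp [Matrix.one_mulVec]
    | succ k ih =>
        rw [hsE k, hsO k, Matrix.mulVec_mulVec, ← hM, ih, Matrix.mulVec_mulVec, ← pow_succ']
  have hexp : ∀ (k : ℕ) (a : ι), sE k a = ∑ i, c i * (μ i ^ k * B i a) := by
    intro k a
    rw [hSk k]
    calc (M ^ k).mulVec (sE 0) a
        = ∑ e, (M ^ k) a e * sE 0 e := rfl
      _ = ∑ e, (M ^ k) a e * ∑ i, c i * B i e := by
          refine Finset.sum_congr rfl fun e _ => by rw [← hreprs e]
      _ = ∑ e, ∑ i, (M ^ k) a e * (c i * B i e) := by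
          refine Finset.sum_congr rfl fun e _ => by rw [Finset.mul_sum]
      _ = ∑ i, ∑ e, (M ^ k) a e * (c i * B i e) := Finset.sum_comm
      _ = ∑ i, c i * ∑ e, (M ^ k) a e * B i e := by
          refine Finset.sum_congr rfl fun i _ => ?_
          rw [Finset.mul_sum]
          exact Finset.sum_congr rfl fun e _ => by ring
      _ = ∑ i, c i * (μ i ^ k * B i a) := by
          refine Finset.sum_congr rfl fun i _ => ?_
          congr 1
          have h := congrFun (hpowB i k) a
          simpa [Matrix.mulVec, dotProduct] using h
  -- eigenvalue relation with t
  have hd_eig : ∀ i, μ i * d i = τ⁻¹ * d i := by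
    intro i
    have hsymswap : dotProduct (M.mulVec (B i)) (tE 0)
        = dotProduct (B i) (M.mulVec (tE 0)) := by
      rw [Matrix.dotProduct_mulVec]
      congr 1
      conv_rhs => rw [← hMsymT]
      rw [Matrix.vecMul_transpose]
    rw [hM] at hsymswap
    rw [hmarkov, hMB i] at hsymswap
    rw [smul_dotProduct, dotProduct_smul] at hsymswap
    simpa [dotProduct, hdd, smul_eq_mul] using hsymswap
  have hd0 : ∀ i, μ i ≠ τ⁻¹ → d i = 0 := by
    intro i hi
    have h := hd_eig i
    have : (μ i - τ⁻¹) * d i = 0 := by ring_nf; linarith [h]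
    rcases mul_eq_zero.mp this with h' | h'
    · exact absurd (sub_eq_zero.mp h') hi
    · exact h'
  have hgap : ∀ i, μ i ≠ τ⁻¹ → |μ i| < τ⁻¹ := by
    intro i hi
    exact aux_gap M hMsymT m hposM (tE 0) (htpos 0) τ⁻¹ hτinv.le hmarkov (B i) (μ i)
      (hMB i) (hBne i) (hd0 i hi)
  have hdne : ∀ i, μ i = τ⁻¹ → d i ≠ 0 := by
    intro i hi h0
    have := aux_gap M hMsymT m hposM (tE 0) (htpos 0) τ⁻¹ hτinv.le hmarkov (B i) (μ i)
      (hMB i) (hBne i) h0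
    rw [hi, abs_of_pos hτinv] at this
    exact lt_irrefl _ this
  -- existence and uniqueness of the Perron index
  have hex : ∃ i, μ i = τ⁻¹ := by
    by_contra h
    push_neg at h
    have a := Classical.arbitrary ι
    have h0 : tE 0 a = 0 := by
      rw [hreprt a]
      refine Finset.sum_eq_zero fun i _ => ?_
      rw [hd0 i (h i), zero_mul]
    exact (htpos 0 a).ne' h0
  obtain ⟨i0, hi0⟩ := hex
  have horthij : ∀ i j, (inner ℝ (b i) (b j) : ℝ) = if i = j then 1 else 0 := by
    intro i j
    exact orthonormal_iff_ite.mp b.orthonormal i j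
  have hBB : ∀ i j, ∑ a, B i a * B j a = if i = j then 1 else 0 := by
    intro i j
    exact (hinner (b i) (b j)).symm.trans (horthij i j)
  have huniq : ∀ j, μ j = τ⁻¹ → j = i0 := by
    intro j hj
    by_contra hne
    set v : ι → ℝ := d j • B i0 - d i0 • B j with hv
    have hveig : M.mulVec v = τ⁻¹ • v := by
      rw [hv, Matrix.mulVec_sub, Matrix.mulVec_smul, Matrix.mulVec_smul, hMB, hMB,
        hi0, hj]
      funext a
      simp only [Pi.sub_apply, Pi.smul_apply, smul_eq_mul]
      ring
    have horthv : ∑ a, v a * tE 0 a = 0 := by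
      have : ∑ a, v a * tE 0 a
          = d j * (∑ a, B i0 a * tE 0 a) - d i0 * (∑ a, B j a * tE 0 a) := by
        rw [Finset.mul_sum, Finset.mul_sum, ← Finset.sum_sub_distrib]
        refine Finset.sum_congr rfl fun a _ => ?_
        simp only [hv, Pi.sub_apply, Pi.smul_apply, smul_eq_mul]
        ring
      rw [this]
      show d j * d i0 - d i0 * d j = 0
      ring
    have hvne : v ≠ 0 := by
      intro h0
      have hdj : ∑ a, B i0 a * v a = d j := by
        have : ∑ a, B i0 a * v a
            = d j * (∑ a, B i0 a * B i0 a) - d i0 * (∑ a, B i0 a * B j a) := by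
          rw [Finset.mul_sum, Finset.mul_sum, ← Finset.sum_sub_distrib]
          refine Finset.sum_congr rfl fun a _ => ?_
          simp only [hv, Pi.sub_apply, Pi.smul_apply, smul_eq_mul]
          ring
        rw [this, hBB i0 i0, hBB i0 j, if_pos rfl, if_neg (fun h => hne h.symm)]
        ring
      rw [h0] at hdj
      simp only [Pi.zero_apply, mul_zero, Finset.sum_const_zero] at hdj
      exact hdne j hj hdj.symm
    have := aux_gap M hMsymT m hposM (tE 0) (htpos 0) τ⁻¹ hτinv.le hmarkov v τ⁻¹
      hveig hvne horthv
    rw [abs_of_pos hτinv] at this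
    exact lt_irrefl _ this
  have hdi0 : d i0 ≠ 0 := hdne i0 hi0
  have ht0fun : ∀ a, tE 0 a = d i0 * B i0 a := by
    intro a
    rw [hreprt a]
    rw [Finset.sum_eq_single i0]
    · intro j _ hji0
      rw [hd0 j (fun h => hji0 (huniq j h)), zero_mul]
    · intro h
      exact absurd (Finset.mem_univ i0) h
  have hdsq : ∑ a, tE 0 a ^ 2 = d i0 ^ 2 := by
    have : ∑ a, tE 0 a ^ 2 = d i0 ^ 2 * ∑ a, B i0 a * B i0 a := by
      rw [Finset.mul_sum]
      refine Finset.sum_congr rfl fun a _ => ?_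
      rw [ht0fun a]
      ring
    rw [this, hBB i0 i0, if_pos rfl, mul_one]
  have hci0 : c i0 * d i0 = 1 := by
    have h1 : d i0 * c i0 = ∑ a, tE 0 a * sE 0 a := by
      rw [hcsum i0, Finset.mul_sum]
      refine Finset.sum_congr rfl fun a _ => ?_
      rw [ht0fun a]
      ring
    have h2 : ∑ a, tE 0 a * sE 0 a = 1 := by
      rw [← hnorm 0]
      exact Finset.sum_congr rfl fun a _ => mul_comm _ _
    calc c i0 * d i0 = d i0 * c i0 := mul_comm _ _
      _ = 1 := by rw [h1, h2]
  have hci0' : c i0 = (d i0)⁻¹ := eq_inv_of_mul_eq_one_left (by rw [mul_comm] at hci0 ⊢; exact hci0)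
  -- the limit, coordinatewise
  rw [tendsto_pi_nhds]
  intro a
  have hfun : ∀ k : ℕ, (τ ^ k • sE k) a = ∑ i, c i * ((τ * μ i) ^ k * B i a) := by
    intro k
    rw [Pi.smul_apply, smul_eq_mul, hexp k a, Finset.mul_sum]
    exact Finset.sum_congr rfl fun i _ => by rw [mul_pow]; ring
  have hlimval : ((∑ a', tE 0 a' ^ 2)⁻¹ • tE 0) a = ∑ i, (if i = i0 then c i0 * B i0 a else 0) := by
    rw [Finset.sum_ite_eq' Finset.univ i0 (fun _ => c i0 * B i0 a), if_pos (Finset.mem_univ i0)]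
    rw [Pi.smul_apply, smul_eq_mul, hdsq, ht0fun a, hci0']
    rw [sq]
    field_simp
  simp only [hfun]
  rw [hlimval]
  apply tendsto_finset_sum
  intro i _
  by_cases hi : i = i0
  · subst hi
    rw [if_pos rfl]
    have h1 : τ * μ i = 1 := by rw [hi0, mul_inv_cancel₀ hτne]
    simp only [h1, one_pow, one_mul]
    exact tendsto_const_nhds
  · rw [if_neg hi]
    have hμi : μ i ≠ τ⁻¹ := fun h => hi (huniq i h)
    have habs : |τ * μ i| < 1 := by
      rw [abs_mul, abs_of_pos hτ]
      calc τ * |μ i| < τ * τ⁻¹ := by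
            exact mul_lt_mul_of_pos_left (hgap i hμi) hτ
        _ = 1 := mul_inv_cancel₀ hτne
    have h0 := tendsto_pow_atTop_nhds_zero_of_abs_lt_one habs
    have := ((h0.mul_const (B i a)).const_mul (c i))
    simpa using this
end
end
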